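/- Let T be {0,1}-valued, Y(0) integrable, and e_d(X) = E[T|d(X)] with 0 < e_d(X) < 1 a.s. Then E[(1-T)·Y(0)/(1-e_d(X))] = E[Y(0)] - E[Cov(T, Y(0) | d(X)) / (1 - e_d(X))]. -/

import Mathlib

open MeasureTheory ProbabilityTheory

/-- Conditional covariance given a sub-σ-algebra `m`:
`Cov(A, B | m) = E[A·B | m] - E[A | m] · E[B | m]`. -/
noncomputable def condCov {Ω : Type*} [mΩ : MeasurableSpace Ω] (μ : Measure Ω)
    (m : MeasurableSpace Ω) (A B : Ω → ℝ) : Ω → ℝ :=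
  fun ω => condExp m μ (fun ω' => A ω' * B ω') ω - condExp m μ A ω * condExp m μ B ω

/-- For a {0,1}-valued treatment `T`, outcome `Y(0)`, measurable reduction `d` and reduced
propensity `e_d(X) = E[T | d(X)]` with `0 < e_d(X) < 1` a.s.:
`E[(1-T)·Y(0)/(1-e_d(X))] = E[Y(0)] - E[Cov(T, Y(0) | d(X)) / (1 - e_d(X))]`. -/
theorem ipw_reduced_propensity_control
    {Ω α β : Type*} [MeasurableSpace Ω] [MeasurableSpace α] [MeasurableSpace β]
    (μ : Measure Ω) [IsProbabilityMeasure μ]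
    (X : Ω → α) (d : α → β) (T Y0 : Ω → ℝ)
    (hX : Measurable X) (hd : Measurable d)
    (hT01 : ∀ ω, T ω = 0 ∨ T ω = 1)
    (hY0 : MemLp Y0 2 μ) (hT : MemLp T 2 μ)
    (ed : Ω → ℝ)
    (h_ed : ed = condExp (MeasurableSpace.comap (d ∘ X) inferInstance) μ T)
    (h_pos : ∀ᵐ ω ∂μ, 0 < ed ω ∧ ed ω < 1)
    (hInt1 : Integrable (fun ω => (1 - T ω) * Y0 ω / (1 - ed ω)) μ)
    (hInt2 : Integrable
      (fun ω => condCov μ (MeasurableSpace.comap (d ∘ X) inferInstance) T Y0 ω / (1 - ed ω)) μ) :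
    ∫ ω, (1 - T ω) * Y0 ω / (1 - ed ω) ∂μ
      = ∫ ω, Y0 ω ∂μ
        - ∫ ω, condCov μ (MeasurableSpace.comap (d ∘ X) inferInstance) T Y0 ω / (1 - ed ω) ∂μ := by
  let inst : MeasurableSpace Ω := ‹_›
  set m := MeasurableSpace.comap (d ∘ X) inferInstance with hm_def
  have hm : m ≤ _ := (hd.comp hX).comap_le
  have hed_sm : StronglyMeasurable[m] ed := h_ed ▸ stronglyMeasurable_condExp
  set g : Ω → ℝ := fun ω => (1 - ed ω)⁻¹ with hg_def
  have hg_sm : StronglyMeasurable[m] g :=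
    ((stronglyMeasurable_const.sub hed_sm).measurable.inv).stronglyMeasurable
  have hY0int : Integrable Y0 μ := hY0.integrable one_le_two
  have hTY0 : Integrable (fun ω => T ω * Y0 ω) μ := by
    have h : MemLp (T • Y0) 1 μ := hY0.smul hT (hpqr := ⟨by norm_num [ENNReal.inv_two_add_inv_two]⟩)
    exact memLp_one_iff_integrable.mp h
  have hh : Integrable (fun ω => (1 - T ω) * Y0 ω) μ := by
    have := hY0int.sub hTY0
    simpa [sub_mul, one_mul, Pi.sub_def] using this
  have hgh : Integrable (fun ω => g ω * ((1 - T ω) * Y0 ω)) μ := by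
    have heq : (fun ω => g ω * ((1 - T ω) * Y0 ω))
        = fun ω => (1 - T ω) * Y0 ω / (1 - ed ω) := by
      funext ω; simp only [hg_def]; ring
    rw [heq]; exact hInt1
  -- pull-out property
  have key : condExp m μ (fun ω => g ω * ((1 - T ω) * Y0 ω))
      =ᵐ[μ] fun ω => g ω * (condExp m μ (fun ω => (1 - T ω) * Y0 ω) ω) := by
    have := condExp_mul_of_stronglyMeasurable_left (μ := μ) hg_sm
      (by simpa [Pi.mul_def] using hgh) hh
    simpa [Pi.mul_def] using this
  -- conditional expectation of (1-T)Y0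
  have hsub : condExp m μ (fun ω => (1 - T ω) * Y0 ω)
      =ᵐ[μ] fun ω => condExp m μ Y0 ω - condExp m μ (fun ω => T ω * Y0 ω) ω := by
    have heq : (fun ω => (1 - T ω) * Y0 ω) = fun ω => Y0 ω - T ω * Y0 ω := by
      funext ω; ring
    rw [heq]
    exact condExp_sub hY0int hTY0 m
  -- main a.e. identity
  have hmain : (fun ω => g ω * ((1 - T ω) * Y0 ω))
      =ᵐ[μ] fun ω => (1 - T ω) * Y0 ω / (1 - ed ω) := by
    filter_upwards with ω
    simp only [hg_def]; ring
  have hae : condExp m μ (fun ω => g ω * ((1 - T ω) * Y0 ω))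
      =ᵐ[μ] fun ω => condExp m μ Y0 ω - @condCov Ω inst μ m T Y0 ω / (1 - ed ω) := by
    filter_upwards [key, hsub, h_pos] with ω hk hs hp
    rw [hk, hs]
    have hne : (1 : ℝ) - ed ω ≠ 0 := by linarith [hp.2]
    have hcov : @condCov Ω inst μ m T Y0 ω
        = condExp m μ (fun ω => T ω * Y0 ω) ω - ed ω * condExp m μ Y0 ω := by
      simp [condCov, h_ed]
    rw [hcov]
    simp only [hg_def]
    linear_combination (inv_mul_cancel₀ hne) * condExp m μ Y0 ω
  calc ∫ ω, (1 - T ω) * Y0 ω / (1 - ed ω) ∂μ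
      = ∫ ω, g ω * ((1 - T ω) * Y0 ω) ∂μ := (integral_congr_ae hmain).symm
    _ = ∫ ω, condExp m μ (fun ω => g ω * ((1 - T ω) * Y0 ω)) ω ∂μ :=
        (integral_condExp hm).symm
    _ = ∫ ω, (condExp m μ Y0 ω - @condCov Ω inst μ m T Y0 ω / (1 - ed ω)) ∂μ :=
        integral_congr_ae hae
    _ = ∫ ω, condExp m μ Y0 ω ∂μ - ∫ ω, @condCov Ω inst μ m T Y0 ω / (1 - ed ω) ∂μ :=
        integral_sub integrable_condExp hInt2
    _ = ∫ ω, Y0 ω ∂μ - ∫ ω, @condCov Ω inst μ m T Y0 ω / (1 - ed ω) ∂μ := by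
        rw [integral_condExp (μ := μ) (f := Y0) hm]
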